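/- Let n and B be positive integers with B < n, let A be a real number with 1 ≤ A < n, and assume A + B ≤ n. Let 𝒜 ⊆ ℝⁿ be the set of tuples a = (a₁, …, a_n) such that: for every i, a_i = 0 or a_i ≥ 1; a₁ ≤ A; Σ_{i=1}^n a_i = n; and for each i ≥ 2, either a_i = 0 or the number of indices t ≥ 2 with a_t = a_i is at least B. Then the maximum over a ∈ 𝒜 of Σ_{i=1}^n a_i² is attained and equals A² + (n−A)²/B if A(B+1) ≥ 2n, and equals n²/B if A(B+1) ≤ 2n. -/

import Mathlib

open Finset

lemma aux_card (n : ℕ) (p : ℕ → Prop) [DecidablePred p] :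
    (Finset.univ.filter (fun i : Fin n => p i.val)).card
      = ((Finset.range n).filter p).card := by
  rw [← Finset.card_image_of_injective _ Fin.val_injective]
  congr 1
  ext j
  simp only [Finset.mem_image, Finset.mem_filter, Finset.mem_univ, true_and,
    Finset.mem_range]
  constructor
  · rintro ⟨i, hp, rfl⟩; exact ⟨i.isLt, hp⟩
  · rintro ⟨hj, hp⟩; exact ⟨⟨j, hj⟩, hp, rfl⟩

lemma ncard_block (n B : ℕ) (hBn : B < n) :
    {t : Fin n | 1 ≤ (t : ℕ) ∧ (t : ℕ) ≤ B}.ncard = B := by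
  classical
  have h1 : {t : Fin n | 1 ≤ (t : ℕ) ∧ (t : ℕ) ≤ B}
      = ↑(Finset.univ.filter (fun t : Fin n => 1 ≤ (t : ℕ) ∧ (t : ℕ) ≤ B)) := by
    ext t; simp
  rw [h1, Set.ncard_coe_finset]
  rw [aux_card n (fun j => 1 ≤ j ∧ j ≤ B)]
  have h2 : (Finset.range n).filter (fun j => 1 ≤ j ∧ j ≤ B) = Finset.Ico 1 (B+1) := by
    ext j; simp; omega
  rw [h2, Nat.card_Ico]
  omega

lemma sum_witness (n B : ℕ) (hB : 0 < B) (hBn : B < n) (v c : ℝ) :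
    ∑ i : Fin n, (if (i : ℕ) = 0 then v else if (i : ℕ) ≤ B then c else 0)
      = v + B * c := by
  rw [Fin.sum_univ_eq_sum_range (fun j => if j = 0 then v else if j ≤ B then c else 0) n]
  have step : ∀ j ∈ Finset.range n, (if j = 0 then v else if j ≤ B then c else 0)
      = (if j = 0 then v else 0) + (if 1 ≤ j ∧ j ≤ B then c else 0) := by
    intro j _
    split_ifs <;> first | (exfalso; omega) | ring
  rw [Finset.sum_congr rfl step, Finset.sum_add_distrib]
  have e1 : ∑ j ∈ Finset.range n, (if j = 0 then v else 0) = v := by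
    rw [Finset.sum_ite_eq' (Finset.range n) 0 (fun _ => v),
      if_pos (Finset.mem_range.2 (hB.trans hBn))]
  have e2 : ∑ j ∈ Finset.range n, (if 1 ≤ j ∧ j ≤ B then c else 0) = B * c := by
    rw [← Finset.sum_filter]
    have h2 : (Finset.range n).filter (fun j => 1 ≤ j ∧ j ≤ B) = Finset.Ico 1 (B+1) := by
      ext j; simp; omega
    rw [h2, Finset.sum_const, Nat.card_Ico, nsmul_eq_mul]
    simp
  rw [e1, e2]

lemma sum_sq_bound (n B : ℕ) (hB : 0 < B) (hn : 0 < n)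
    (a : Fin n → ℝ)
    (h0 : ∀ i, a i = 0 ∨ 1 ≤ a i)
    (hsum : (∑ i, a i) = n)
    (hcls : ∀ i : Fin n, (i : ℕ) ≠ 0 →
      (a i = 0 ∨ B ≤ {t : Fin n | (t : ℕ) ≠ 0 ∧ a t = a i}.ncard)) :
    ∑ i, (a i)^2 ≤ (a ⟨0, hn⟩)^2 + ((n : ℝ) - a ⟨0, hn⟩)^2 / B := by
  classical
  set i0 : Fin n := ⟨0, hn⟩ with hi0
  have hnn : ∀ i, 0 ≤ a i := fun i => (h0 i).elim (fun h => h.ge) (le_trans zero_le_one)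
  set S : ℝ := ∑ i ∈ Finset.univ.erase i0, a i with hS
  have hsplit : ∀ g : Fin n → ℝ, ∑ i, g i = g i0 + ∑ i ∈ Finset.univ.erase i0, g i := by
    intro g
    rw [Finset.add_sum_erase _ g (Finset.mem_univ i0)]
  have hSval : S = (n : ℝ) - a i0 := by
    have h := hsplit a
    rw [hsum] at h
    linarith [h]
  have hSnn : 0 ≤ S := Finset.sum_nonneg (fun i _ => hnn i)
  have hBpos : (0:ℝ) < B := by exact_mod_cast hB
  have key : ∀ i ∈ Finset.univ.erase i0, (B:ℝ) * a i ≤ S := by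
    intro i hi
    have hiv : (i : ℕ) ≠ 0 := by
      intro h
      exact (Finset.mem_erase.1 hi).1 (Fin.ext h)
    rcases hcls i hiv with h | h
    · rw [h, mul_zero]; exact hSnn
    · have hnc : {t : Fin n | (t : ℕ) ≠ 0 ∧ a t = a i}.ncard
          = (Finset.univ.filter (fun t : Fin n => (t : ℕ) ≠ 0 ∧ a t = a i)).card := by
        rw [← Set.ncard_coe_finset]
        congr 1
        ext t
        simp
      rw [hnc] at h
      set T := Finset.univ.filter (fun t : Fin n => (t : ℕ) ≠ 0 ∧ a t = a i) with hT
      have hsub : T ⊆ Finset.univ.erase i0 := by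
        intro t ht
        simp only [hT, Finset.mem_filter] at ht
        exact Finset.mem_erase.2 ⟨fun he => ht.2.1 (by rw [he]), Finset.mem_univ t⟩
      have h1 : ∑ t ∈ T, a t = (T.card : ℝ) * a i := by
        rw [Finset.sum_congr rfl (fun t ht => (Finset.mem_filter.1 ht).2.2),
          Finset.sum_const, nsmul_eq_mul]
      have h2 : ∑ t ∈ T, a t ≤ S :=
        Finset.sum_le_sum_of_subset_of_nonneg hsub (fun t _ _ => hnn t)
      have h3 : (B : ℝ) ≤ (T.card : ℝ) := by exact_mod_cast h
      calc (B:ℝ) * a i ≤ (T.card : ℝ) * a i := by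
            exact mul_le_mul_of_nonneg_right h3 (hnn i)
        _ ≤ S := by rw [← h1] at *; exact h2
  have hsq : ∑ i ∈ Finset.univ.erase i0, (a i)^2 ≤ S^2 / B := by
    have : ∀ i ∈ Finset.univ.erase i0, (a i)^2 ≤ (S / B) * a i := by
      intro i hi
      have hai : a i ≤ S / B := by
        rw [le_div_iff₀ hBpos]
        linarith [key i hi]
      calc (a i)^2 = a i * a i := (sq (a i))
        _ ≤ (S / B) * a i := mul_le_mul_of_nonneg_right hai (hnn i)
    calc ∑ i ∈ Finset.univ.erase i0, (a i)^2
        ≤ ∑ i ∈ Finset.univ.erase i0, (S / B) * a i := Finset.sum_le_sum this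
      _ = (S / B) * S := by rw [← Finset.mul_sum]
      _ = S^2 / B := by ring
  rw [hsplit (fun i => (a i)^2)]
  rw [← hSval]
  linarith [hsq]

lemma cmp1 (n B : ℕ) (hB : 0 < B) (A x : ℝ) (hx0 : 0 ≤ x) (hxA : x ≤ A)
    (hc : 2 * (n:ℝ) ≤ A * (B + 1)) :
    x^2 + ((n:ℝ) - x)^2 / B ≤ A^2 + ((n:ℝ) - A)^2 / B := by
  have hBpos : (0:ℝ) < B := by exact_mod_cast hB
  have hx1 : 0 ≤ x * ((B:ℝ) + 1) := mul_nonneg hx0 (by positivity)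
  have h2 : 0 ≤ (A - x) * ((A + x) * ((B:ℝ) + 1) - 2 * n) :=
    mul_nonneg (by linarith) (by nlinarith)
  have key : x^2 * B + ((n:ℝ) - x)^2 ≤ A^2 * B + ((n:ℝ) - A)^2 := by nlinarith
  have e1 : x^2 + ((n:ℝ) - x)^2 / B = (x^2 * B + ((n:ℝ) - x)^2) / B := by
    field_simp
  have e2 : A^2 + ((n:ℝ) - A)^2 / B = (A^2 * B + ((n:ℝ) - A)^2) / B := by
    field_simp
  rw [e1, e2]
  gcongr

lemma cmp2 (n B : ℕ) (hB : 0 < B) (A x : ℝ) (hx0 : 0 ≤ x) (hxA : x ≤ A)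
    (hc : A * (B + 1) ≤ 2 * (n:ℝ)) :
    x^2 + ((n:ℝ) - x)^2 / B ≤ (n:ℝ)^2 / B := by
  have hBpos : (0:ℝ) < B := by exact_mod_cast hB
  have h1 : x * ((B:ℝ)+1) ≤ A * ((B:ℝ)+1) := mul_le_mul_of_nonneg_right hxA (by positivity)
  have h2 : 0 ≤ x * (2 * (n:ℝ) - x * ((B:ℝ)+1)) := mul_nonneg hx0 (by linarith)
  have key : x^2 * B + ((n:ℝ) - x)^2 ≤ (n:ℝ)^2 := by nlinarith
  have e1 : x^2 + ((n:ℝ) - x)^2 / B = (x^2 * B + ((n:ℝ) - x)^2) / B := by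
    field_simp
  rw [e1]
  gcongr

/-- Lemma 5.6 (optimization lemma, simpler form): the maximum of `∑ aᵢ²` over the set `𝒜`
of tuples described in the paper. Indices are `Fin n`, with `a₁` corresponding to index
`0` and "`i ≥ 2`" to indices `i ≠ 0`. -/
theorem optimization_lemma_easier (n B : ℕ) (hB : 0 < B) (hBn : B < n)
    (A : ℝ) (hA1 : 1 ≤ A) (hAn : A < n) (hAB : A + B ≤ (n : ℝ)) :
    (2 * (n : ℝ) ≤ A * (B + 1) →
      IsGreatest
        ((fun a : Fin n → ℝ => ∑ i, (a i) ^ 2) ''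
          {a : Fin n → ℝ |
            (∀ i, a i = 0 ∨ 1 ≤ a i) ∧
            (∀ i : Fin n, (i : ℕ) = 0 → a i ≤ A) ∧
            (∑ i, a i) = n ∧
            (∀ i : Fin n, (i : ℕ) ≠ 0 →
              (a i = 0 ∨ B ≤ {t : Fin n | (t : ℕ) ≠ 0 ∧ a t = a i}.ncard))})
        (A ^ 2 + ((n : ℝ) - A) ^ 2 / B)) ∧
    (A * (B + 1) ≤ 2 * (n : ℝ) →
      IsGreatest
        ((fun a : Fin n → ℝ => ∑ i, (a i) ^ 2) ''
          {a : Fin n → ℝ |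
            (∀ i, a i = 0 ∨ 1 ≤ a i) ∧
            (∀ i : Fin n, (i : ℕ) = 0 → a i ≤ A) ∧
            (∑ i, a i) = n ∧
            (∀ i : Fin n, (i : ℕ) ≠ 0 →
              (a i = 0 ∨ B ≤ {t : Fin n | (t : ℕ) ≠ 0 ∧ a t = a i}.ncard))})
        ((n : ℝ) ^ 2 / B)) := by
  classical
  have hn : 0 < n := hB.trans hBn
  set i0 : Fin n := ⟨0, hn⟩ with hi0
  have hBpos : (0:ℝ) < B := by exact_mod_cast hB
  have hBne : (B:ℝ) ≠ 0 := ne_of_gt hBpos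
  have hBle : (B:ℝ) ≤ (n:ℝ) := by exact_mod_cast hBn.le
  -- generic witness facts
  constructor
  · -- case 1 : 2n ≤ A(B+1)
    intro hc
    set c : ℝ := ((n:ℝ) - A) / B with hcdef
    have hc1 : 1 ≤ c := by
      rw [hcdef, le_div_iff₀ hBpos]
      linarith
    set w : Fin n → ℝ := fun i => if (i : ℕ) = 0 then A else if (i : ℕ) ≤ B then c else 0
      with hw
    constructor
    · -- membership
      refine ⟨w, ⟨?_, ?_, ?_, ?_⟩, ?_⟩
      · intro i
        simp only [hw]
        split_ifs
        · right; exact hA1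
        · right; exact hc1
        · left; rfl
      · intro i hi
        simp only [hw, if_pos hi]
        exact le_refl A
      · rw [show (∑ i, w i) = ∑ i : Fin n,
            (if (i : ℕ) = 0 then A else if (i : ℕ) ≤ B then c else 0) from rfl,
          sum_witness n B hB hBn A c]
        have : (B:ℝ) * c = (n:ℝ) - A := by
          rw [hcdef]; field_simp
        linarith
      · intro i hi
        by_cases hiB : (i : ℕ) ≤ B
        · right
          have hwic : w i = c := by simp only [hw, if_neg hi, if_pos hiB]
          have hsub : {t : Fin n | 1 ≤ (t : ℕ) ∧ (t : ℕ) ≤ B}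
              ⊆ {t : Fin n | (t : ℕ) ≠ 0 ∧ w t = w i} := by
            intro t ht
            obtain ⟨ht1, ht2⟩ := ht
            refine ⟨by omega, ?_⟩
            rw [hwic]
            simp only [hw, if_neg (by omega : ¬ (t:ℕ) = 0), if_pos ht2]
          calc B = {t : Fin n | 1 ≤ (t : ℕ) ∧ (t : ℕ) ≤ B}.ncard :=
                (ncard_block n B hBn).symm
            _ ≤ _ := Set.ncard_le_ncard hsub (Set.toFinite _)
        · left
          simp only [hw, if_neg hi, if_neg hiB]
      · show (∑ i, (w i)^2) = A ^ 2 + ((n : ℝ) - A) ^ 2 / B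
        have hpt : ∀ i : Fin n, (w i)^2
            = (if (i : ℕ) = 0 then A^2 else if (i : ℕ) ≤ B then c^2 else 0) := by
          intro i
          simp only [hw]
          split_ifs <;> ring
        rw [Finset.sum_congr rfl (fun i _ => hpt i), sum_witness n B hB hBn (A^2) (c^2)]
        rw [hcdef]
        field_simp
    · -- upper bound
      rintro y ⟨a, ⟨h0, hA0, hsum, hcls⟩, rfl⟩
      show (∑ i, (a i)^2) ≤ A ^ 2 + ((n : ℝ) - A) ^ 2 / B
      have hx0 : 0 ≤ a i0 := (h0 i0).elim (fun h => h.ge) (le_trans zero_le_one)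
      have hxA : a i0 ≤ A := hA0 i0 rfl
      exact le_trans (sum_sq_bound n B hB hn a h0 hsum hcls)
        (cmp1 n B hB A (a i0) hx0 hxA hc)
  · -- case 2 : A(B+1) ≤ 2n
    intro hc
    set d : ℝ := (n:ℝ) / B with hddef
    have hd1 : 1 ≤ d := by
      rw [hddef, le_div_iff₀ hBpos]
      linarith
    set w : Fin n → ℝ := fun i => if (i : ℕ) = 0 then (0:ℝ) else if (i : ℕ) ≤ B then d else 0
      with hw
    constructor
    · refine ⟨w, ⟨?_, ?_, ?_, ?_⟩, ?_⟩
      · intro i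
        simp only [hw]
        split_ifs
        · left; rfl
        · right; exact hd1
        · left; rfl
      · intro i hi
        simp only [hw, if_pos hi]
        linarith
      · rw [show (∑ i, w i) = ∑ i : Fin n,
            (if (i : ℕ) = 0 then (0:ℝ) else if (i : ℕ) ≤ B then d else 0) from rfl,
          sum_witness n B hB hBn 0 d]
        rw [hddef]
        field_simp
        ring
      · intro i hi
        by_cases hiB : (i : ℕ) ≤ B
        · right
          have hwic : w i = d := by simp only [hw, if_neg hi, if_pos hiB]
          have hsub : {t : Fin n | 1 ≤ (t : ℕ) ∧ (t : ℕ) ≤ B}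
              ⊆ {t : Fin n | (t : ℕ) ≠ 0 ∧ w t = w i} := by
            intro t ht
            obtain ⟨ht1, ht2⟩ := ht
            refine ⟨by omega, ?_⟩
            rw [hwic]
            simp only [hw, if_neg (by omega : ¬ (t:ℕ) = 0), if_pos ht2]
          calc B = {t : Fin n | 1 ≤ (t : ℕ) ∧ (t : ℕ) ≤ B}.ncard :=
                (ncard_block n B hBn).symm
            _ ≤ _ := Set.ncard_le_ncard hsub (Set.toFinite _)
        · left
          simp only [hw, if_neg hi, if_neg hiB]
      · show (∑ i, (w i)^2) = (n : ℝ) ^ 2 / B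
        have hpt : ∀ i : Fin n, (w i)^2
            = (if (i : ℕ) = 0 then (0:ℝ)^2 else if (i : ℕ) ≤ B then d^2 else 0) := by
          intro i
          simp only [hw]
          split_ifs <;> ring
        rw [Finset.sum_congr rfl (fun i _ => hpt i), sum_witness n B hB hBn ((0:ℝ)^2) (d^2)]
        rw [hddef]
        field_simp
        ring
    · rintro y ⟨a, ⟨h0, hA0, hsum, hcls⟩, rfl⟩
      show (∑ i, (a i)^2) ≤ (n : ℝ) ^ 2 / B
      have hx0 : 0 ≤ a i0 := (h0 i0).elim (fun h => h.ge) (le_trans zero_le_one)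
      have hxA : a i0 ≤ A := hA0 i0 rfl
      exact le_trans (sum_sq_bound n B hB hn a h0 hsum hcls)
        (cmp2 n B hB A (a i0) hx0 hxA hc)
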